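/- Let g be a polynomial with real coefficients and let x₁ ≤ x₂ ≤ x₃ be real numbers such that the multiset {x₁, x₂, x₃} is contained in the multiset of real roots of g (roots counted with multiplicity). If |g(x)| < 1 for every real x with x₁ ≤ x ≤ x₃, then each of the polynomials g − 1 and g + 1 has a complex root with nonzero imaginary part. -/

import Mathlib

open Polynomial Real

lemma eval_deriv_prod (s : Multiset ℂ) (w : ℂ) (hw : ∀ z ∈ s, w ≠ z) :
    eval w (derivative (s.map (fun z => X - C z)).prod)
      = eval w (s.map (fun z => X - C z)).prod * (s.map (fun z => (w - z)⁻¹)).sum := by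
  induction s using Multiset.induction_on with
  | empty => simp
  | cons a s ih =>
    have ha : w - a ≠ 0 := sub_ne_zero.mpr (hw a (Multiset.mem_cons_self a s))
    have ih' := ih (fun z hz => hw z (Multiset.mem_cons_of_mem hz))
    simp only [Multiset.map_cons, Multiset.prod_cons, Multiset.sum_cons,
      derivative_mul, derivative_X_sub_C, one_mul,
      eval_add, eval_mul, eval_sub, eval_X, eval_C, ih']
    field_simp

lemma eval_deriv2_prod (s : Multiset ℂ) (w : ℂ) (hw : ∀ z ∈ s, w ≠ z) :
    eval w (derivative (derivative (s.map (fun z => X - C z)).prod))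
      = eval w (s.map (fun z => X - C z)).prod *
        (((s.map (fun z => (w - z)⁻¹)).sum) ^ 2 - (s.map (fun z => ((w - z)⁻¹) ^ 2)).sum) := by
  induction s using Multiset.induction_on with
  | empty => simp
  | cons a s ih =>
    have ha : w - a ≠ 0 := sub_ne_zero.mpr (hw a (Multiset.mem_cons_self a s))
    have hw' : ∀ z ∈ s, w ≠ z := fun z hz => hw z (Multiset.mem_cons_of_mem hz)
    have ih' := ih hw'
    have ih1 := eval_deriv_prod s w hw'
    simp only [Multiset.map_cons, Multiset.prod_cons, Multiset.sum_cons,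
      derivative_mul, derivative_X_sub_C, one_mul, derivative_add,
      eval_add, eval_mul, eval_sub, eval_X, eval_C, ih', ih1]
    field_simp
    ring

lemma eval_map_real (p : Polynomial ℝ) (y : ℝ) :
    eval (y : ℂ) (p.map (algebraMap ℝ ℂ)) = ((p.eval y : ℝ) : ℂ) := by
  rw [eval_map]
  have : (y : ℂ) = algebraMap ℝ ℂ y := rfl
  rw [this, eval₂_at_apply]
  rfl

lemma crit_sum (p : Polynomial ℝ) (y : ℝ)
    (hp : p.eval y ≠ 0) (hp' : p.derivative.eval y = 0)
    (hy : ∀ z ∈ (p.map (algebraMap ℝ ℂ)).roots, (y : ℂ) ≠ z) :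
    ((p.map (algebraMap ℝ ℂ)).roots.map fun z => ((y : ℂ) - z)⁻¹).sum = 0 := by
  set H := p.map (algebraMap ℝ ℂ) with hHdef
  have hfact := Splits.eq_prod_roots (IsAlgClosed.splits H)
  set P := (H.roots.map fun a => X - C a).prod with hPdef
  have hHy : eval (y : ℂ) H = ((p.eval y : ℝ) : ℂ) := eval_map_real p y
  have hHy0 : eval (y : ℂ) H ≠ 0 := by
    rw [hHy]; exact_mod_cast Complex.ofReal_ne_zero.mpr hp
  have h1 : eval (y : ℂ) H = H.leadingCoeff * eval (y : ℂ) P := by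
    conv_lhs => rw [hfact]
    simp [eval_mul]
  have hc : H.leadingCoeff ≠ 0 ∧ eval (y : ℂ) P ≠ 0 := by
    constructor <;> intro h <;> rw [h1] at hHy0 <;> simp [h] at hHy0
  have hH'y : eval (y : ℂ) (derivative H) = 0 := by
    rw [hHdef, derivative_map, eval_map_real]
    rw [hp']
    simp
  have h2 : eval (y : ℂ) (derivative H) =
      H.leadingCoeff * eval (y : ℂ) (derivative P) := by
    conv_lhs => rw [hfact]
    rw [derivative_C_mul]
    simp [eval_mul]
  rw [h2, eval_deriv_prod _ _ hy] at hH'y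
  rcases mul_eq_zero.mp hH'y with h | h
  · exact absurd h hc.1
  · rcases mul_eq_zero.mp h with h | h
    · exact absurd h hc.2
    · exact h

lemma crit_sum_sq (p : Polynomial ℝ) (y : ℝ)
    (hp : p.eval y ≠ 0) (hp' : p.derivative.eval y = 0)
    (hp'' : p.derivative.derivative.eval y = 0)
    (hy : ∀ z ∈ (p.map (algebraMap ℝ ℂ)).roots, (y : ℂ) ≠ z) :
    ((p.map (algebraMap ℝ ℂ)).roots.map fun z => (((y : ℂ) - z)⁻¹) ^ 2).sum = 0 := by
  have hS1 := crit_sum p y hp hp' hy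
  set H := p.map (algebraMap ℝ ℂ) with hHdef
  have hfact := Splits.eq_prod_roots (IsAlgClosed.splits H)
  set P := (H.roots.map fun a => X - C a).prod with hPdef
  have hHy : eval (y : ℂ) H = ((p.eval y : ℝ) : ℂ) := eval_map_real p y
  have hHy0 : eval (y : ℂ) H ≠ 0 := by
    rw [hHy]; exact_mod_cast Complex.ofReal_ne_zero.mpr hp
  have h1 : eval (y : ℂ) H = H.leadingCoeff * eval (y : ℂ) P := by
    conv_lhs => rw [hfact]
    simp [eval_mul]
  have hc : H.leadingCoeff ≠ 0 ∧ eval (y : ℂ) P ≠ 0 := by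
    constructor <;> intro h <;> rw [h1] at hHy0 <;> simp [h] at hHy0
  have hH''y : eval (y : ℂ) (derivative (derivative H)) = 0 := by
    rw [hHdef, derivative_map, derivative_map, eval_map_real]
    rw [hp'']
    simp
  have h2 : eval (y : ℂ) (derivative (derivative H)) =
      H.leadingCoeff * eval (y : ℂ) (derivative (derivative P)) := by
    conv_lhs => rw [hfact]
    rw [derivative_C_mul, derivative_C_mul]
    simp [eval_mul]
  rw [h2, eval_deriv2_prod _ _ hy] at hH''y
  rcases mul_eq_zero.mp hH''y with h | h
  · exact absurd h hc.1
  · rcases mul_eq_zero.mp h with h | h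
    · exact absurd h hc.2
    · rw [hS1] at h
      simpa using (sub_eq_zero.mp h).symm

lemma multiset_sum_map_sub {α : Type*} (s : Multiset α) (f g : α → ℝ) :
    (s.map fun a => f a - g a).sum = (s.map f).sum - (s.map g).sum := by
  induction s using Multiset.induction_on with
  | empty => simp
  | cons a s ih =>
    simp only [Multiset.map_cons, Multiset.sum_cons, ih]
    ring

lemma key (g : Polynomial ℝ) (x₁ x₂ x₃ : ℝ)
    (h12 : x₁ ≤ x₂) (h23 : x₂ ≤ x₃)
    (hroots : ({x₁, x₂, x₃} : Multiset ℝ) ≤ g.roots)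
    (hlt : ∀ x : ℝ, x₁ ≤ x → x ≤ x₃ → |g.eval x| < 1) :
    ∃ z : ℂ, z.im ≠ 0 ∧ (Polynomial.aeval z) (g - 1) = 0 := by
  classical
  by_contra hcon
  push_neg at hcon
  set p : Polynomial ℝ := g - 1 with hpdef
  have h13 : x₁ ≤ x₃ := le_trans h12 h23
  have hg0 : g ≠ 0 := by
    intro h
    have := Multiset.card_le_card hroots
    rw [h] at this
    simp at this
  have hcard : 3 ≤ g.natDegree := by
    have h1 := Multiset.card_le_card hroots
    have h2 := g.card_roots'
    simp only [Multiset.insert_eq_cons, Multiset.card_cons, Multiset.card_singleton] at h1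
    omega
  have hx : ∀ x ∈ ({x₁, x₂, x₃} : Multiset ℝ), g.eval x = 0 := by
    intro x hxm
    exact ((mem_roots').mp (Multiset.mem_of_le hroots hxm)).2
  have hpe : ∀ y, x₁ ≤ y → y ≤ x₃ → p.eval y < 0 := by
    intro y hy1 hy3
    have := hlt y hy1 hy3
    have h1 : g.eval y < 1 := lt_of_le_of_lt (le_abs_self _) this
    simp only [hpdef, eval_sub, eval_one]
    linarith
  have hp0 : p ≠ 0 := by
    intro h
    have := hpe x₁ le_rfl h13
    rw [h] at this
    simp at this
  set H := p.map (algebraMap ℝ ℂ) with hHdef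
  have hH0 : H ≠ 0 := map_ne_zero hp0
  have hrealroots : ∀ z ∈ H.roots, z.im = 0 := by
    intro z hz
    by_contra him
    have hroot : eval z H = 0 := ((mem_roots').mp hz).2
    have : (Polynomial.aeval z) (g - 1) = 0 := by
      rw [aeval_def, ← eval_map]
      exact hroot
    exact hcon z him this
  have hzre : ∀ z ∈ H.roots, z = ((z.re : ℝ) : ℂ) := by
    intro z hz
    apply Complex.ext
    · simp
    · simp [hrealroots z hz]
  have hout : ∀ z ∈ H.roots, z.re < x₁ ∨ x₃ < z.re := by
    intro z hz
    by_contra hcontra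
    push_neg at hcontra
    have h0 : eval ((z.re : ℝ) : ℂ) H = 0 := by
      rw [← hzre z hz]
      exact ((mem_roots').mp hz).2
    rw [eval_map_real] at h0
    have : p.eval z.re = 0 := by exact_mod_cast h0
    have := hpe z.re hcontra.1 hcontra.2
    linarith
  have hney : ∀ y : ℝ, x₁ ≤ y → y ≤ x₃ → ∀ z ∈ H.roots, (y : ℂ) ≠ z := by
    intro y hy1 hy3 z hz heq
    rw [hzre z hz] at heq
    have : y = z.re := by exact_mod_cast heq
    rcases hout z hz with h | h <;> linarith [this]
  have hpder : p.derivative = g.derivative := by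
    simp [hpdef]
  -- real sum identity at critical points
  have hsum : ∀ y : ℝ, x₁ ≤ y → y ≤ x₃ → g.derivative.eval y = 0 →
      (H.roots.map fun z => (y - z.re)⁻¹).sum = 0 := by
    intro y hy1 hy3 hder
    have hp' : p.derivative.eval y = 0 := by rw [hpder]; exact hder
    have h := crit_sum p y (ne_of_lt (hpe y hy1 hy3)) hp' (hney y hy1 hy3)
    have hmap : (H.roots.map fun z => ((y : ℂ) - z)⁻¹) =
        (H.roots.map fun z => (y - z.re)⁻¹).map (fun r : ℝ => (r : ℂ)) := by
      rw [Multiset.map_map]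
      apply Multiset.map_congr rfl
      intro z hz
      rw [hzre z hz]
      simp
    rw [hmap] at h
    have h2 : ((H.roots.map fun z => (y - z.re)⁻¹).sum : ℝ) = (0 : ℝ) := by
      have := (map_multiset_sum Complex.ofRealHom (H.roots.map fun z => (y - z.re)⁻¹)).symm
      simp only [Complex.ofRealHom_eq_coe] at this
      rw [this] at h
      exact_mod_cast h
    exact h2
  have hSne : H.roots ≠ 0 := by
    have hdegH : 3 ≤ H.natDegree := by
      rw [hHdef, natDegree_map]
      have : p.natDegree = g.natDegree := by
        rw [hpdef, show (1 : Polynomial ℝ) = C 1 from (map_one C).symm, natDegree_sub_C]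
      omega
    have hdeg0 : H.degree ≠ 0 := by
      intro h
      have : H.natDegree = 0 := by
        rw [natDegree, h]
        rfl
      omega
    obtain ⟨z0, hz0⟩ := IsAlgClosed.exists_root H hdeg0
    intro h
    have : z0 ∈ H.roots := (mem_roots').mpr ⟨hH0, hz0⟩
    rw [h] at this
    simp at this
  -- multiplicity facts
  have hmult : ∀ a : ℝ, ∀ k : ℕ, k ≤ Multiset.count a ({x₁, x₂, x₃} : Multiset ℝ) →
      (X - C a) ^ k ∣ g := by
    intro a k hk
    have h1 : k ≤ g.roots.count a := le_trans hk (Multiset.le_iff_count.mp hroots a)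
    rw [count_roots] at h1
    exact dvd_trans (pow_dvd_pow _ h1) (g.pow_rootMultiplicity_dvd a)
  have deriv_zero_of_double : ∀ a : ℝ, (X - C a) ^ 2 ∣ g → g.derivative.eval a = 0 := by
    rintro a ⟨q, hq⟩
    rw [hq]
    simp [derivative_mul, derivative_pow, derivative_X_sub_C]
  -- Rolle
  have rolle : ∀ a b : ℝ, a < b → g.eval a = 0 → g.eval b = 0 →
      ∃ c, a < c ∧ c < b ∧ g.derivative.eval c = 0 := by
    intro a b hab ha hb
    obtain ⟨c, hc, hc0⟩ := exists_deriv_eq_zero hab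
      ((g.continuous).continuousOn) (by rw [ha, hb])
    refine ⟨c, hc.1, hc.2, ?_⟩
    rw [← Polynomial.deriv]
    exact hc0
  -- contradiction from two critical points
  have finish2 : ∀ y y' : ℝ, x₁ ≤ y → y < y' → y' ≤ x₃ →
      g.derivative.eval y = 0 → g.derivative.eval y' = 0 → False := by
    intro y y' hy1 hyy' hy3 hd hd'
    have s1 := hsum y hy1 (le_of_lt (lt_of_lt_of_le hyy' hy3)) hd
    have s2 := hsum y' (le_trans hy1 (le_of_lt hyy')) hy3 hd'
    have hsub : (H.roots.map fun z => (y - z.re)⁻¹ - (y' - z.re)⁻¹).sum = 0 := by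
      rw [multiset_sum_map_sub, s1, s2]
      ring
    have hpos : ∀ t ∈ (H.roots.map fun z => (y - z.re)⁻¹ - (y' - z.re)⁻¹), 0 < t := by
      intro t ht
      obtain ⟨z, hz, rfl⟩ := Multiset.mem_map.mp ht
      have hzout := hout z hz
      have hyr : y - z.re ≠ 0 := by rcases hzout with h | h <;> intro hc <;> nlinarith
      have hy'r : y' - z.re ≠ 0 := by rcases hzout with h | h <;> intro hc <;> nlinarith
      rw [inv_sub_inv hyr hy'r]
      apply div_pos (by linarith)
      rcases hzout with h | h
      · apply mul_pos <;> linarith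
      · apply mul_pos_of_neg_of_neg <;> linarith
    have hTne : (H.roots.map fun z => (y - z.re)⁻¹ - (y' - z.re)⁻¹) ≠ 0 := by
      intro h
      obtain ⟨z, hz⟩ := Multiset.exists_mem_of_ne_zero hSne
      have : ((y - z.re)⁻¹ - (y' - z.re)⁻¹) ∈
          (H.roots.map fun z => (y - z.re)⁻¹ - (y' - z.re)⁻¹) :=
        Multiset.mem_map_of_mem _ hz
      rw [h] at this
      simp at this
    obtain ⟨t, ht⟩ := Multiset.exists_mem_of_ne_zero hTne
    have := Multiset.all_zero_of_le_zero_le_of_sum_eq_zero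
      (fun x hx => le_of_lt (hpos x hx)) hsub t ht
    exact absurd this (ne_of_gt (hpos t ht))
  rcases h12.lt_or_eq with l12 | e12 <;> rcases h23.lt_or_eq with l23 | e23
  · -- x₁ < x₂ < x₃
    obtain ⟨y, hy1, hy2, hyd⟩ := rolle x₁ x₂ l12
      (hx x₁ (by simp)) (hx x₂ (by simp))
    obtain ⟨y', hy'1, hy'2, hy'd⟩ := rolle x₂ x₃ l23
      (hx x₂ (by simp)) (hx x₃ (by simp))
    exact (finish2 y y' (le_of_lt hy1) (lt_trans hy2 hy'1) (le_of_lt hy'2) hyd hy'd).elim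
  · -- x₁ < x₂ = x₃
    obtain ⟨y, hy1, hy2, hyd⟩ := rolle x₁ x₂ l12
      (hx x₁ (by simp)) (hx x₂ (by simp))
    have hcnt : 2 ≤ Multiset.count x₂ ({x₁, x₂, x₃} : Multiset ℝ) := by
      rw [← e23]
      simp only [Multiset.insert_eq_cons, Multiset.count_cons, Multiset.count_singleton]
      split_ifs <;> omega
    have hy'd := deriv_zero_of_double x₂ (hmult x₂ 2 hcnt)
    exact (finish2 y x₂ (le_of_lt hy1) hy2 (e23.le) hyd hy'd).elim
  · -- x₁ = x₂ < x₃
    obtain ⟨y', hy'1, hy'2, hy'd⟩ := rolle x₂ x₃ l23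
      (hx x₂ (by simp)) (hx x₃ (by simp))
    have hcnt : 2 ≤ Multiset.count x₁ ({x₁, x₂, x₃} : Multiset ℝ) := by
      rw [e12]
      simp only [Multiset.insert_eq_cons, Multiset.count_cons, Multiset.count_singleton]
      split_ifs <;> omega
    have hyd := deriv_zero_of_double x₁ (hmult x₁ 2 hcnt)
    exact (finish2 x₁ y' le_rfl (by rw [e12]; exact hy'1) (le_of_lt hy'2) hyd hy'd).elim
  · -- x₁ = x₂ = x₃ : triple root
    have hcnt : 3 ≤ Multiset.count x₁ ({x₁, x₂, x₃} : Multiset ℝ) := by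
      rw [e12, e23]
      simp only [Multiset.insert_eq_cons, Multiset.count_cons, Multiset.count_singleton]
      split_ifs <;> omega
    obtain ⟨q, hq⟩ := hmult x₁ 3 hcnt
    have hd1 : g.derivative.eval x₁ = 0 := by
      rw [hq]
      simp [derivative_mul, derivative_pow, derivative_X_sub_C]
    have hd2 : g.derivative.derivative.eval x₁ = 0 := by
      rw [hq]
      simp [derivative_mul, derivative_pow, derivative_X_sub_C, derivative_add]
    have hp' : p.derivative.eval x₁ = 0 := by rw [hpder]; exact hd1
    have hp'' : p.derivative.derivative.eval x₁ = 0 := by rw [hpder]; exact hd2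
    have h := crit_sum_sq p x₁ (ne_of_lt (hpe x₁ le_rfl h13)) hp' hp'' (hney x₁ le_rfl h13)
    have hmap : (H.roots.map fun z => (((x₁ : ℂ) - z)⁻¹) ^ 2) =
        (H.roots.map fun z => ((x₁ - z.re)⁻¹) ^ 2).map (fun r : ℝ => (r : ℂ)) := by
      rw [Multiset.map_map]
      apply Multiset.map_congr rfl
      intro z hz
      rw [hzre z hz]
      simp
    rw [hmap] at h
    have h2 : ((H.roots.map fun z => ((x₁ - z.re)⁻¹) ^ 2).sum : ℝ) = (0 : ℝ) := by
      have := (map_multiset_sum Complex.ofRealHom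
        (H.roots.map fun z => ((x₁ - z.re)⁻¹) ^ 2)).symm
      simp only [Complex.ofRealHom_eq_coe] at this
      rw [this] at h
      exact_mod_cast h
    have hpos : ∀ t ∈ (H.roots.map fun z => ((x₁ - z.re)⁻¹) ^ 2), 0 < t := by
      intro t ht
      obtain ⟨z, hz, rfl⟩ := Multiset.mem_map.mp ht
      have hzout := hout z hz
      have hne : x₁ - z.re ≠ 0 := by rcases hzout with hh | hh <;> intro hc <;> nlinarith
      positivity
    have hTne : (H.roots.map fun z => ((x₁ - z.re)⁻¹) ^ 2) ≠ 0 := by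
      intro hh
      obtain ⟨z, hz⟩ := Multiset.exists_mem_of_ne_zero hSne
      have : ((x₁ - z.re)⁻¹) ^ 2 ∈ (H.roots.map fun z => ((x₁ - z.re)⁻¹) ^ 2) :=
        Multiset.mem_map_of_mem _ hz
      rw [hh] at this
      simp at this
    obtain ⟨t, ht⟩ := Multiset.exists_mem_of_ne_zero hTne
    have := Multiset.all_zero_of_le_zero_le_of_sum_eq_zero
      (fun x hx => le_of_lt (hpos x hx)) h2 t ht
    exact absurd this (ne_of_gt (hpos t ht))

theorem nonreal_roots_of_pm_one (g : Polynomial ℝ) (x₁ x₂ x₃ : ℝ)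
    (h12 : x₁ ≤ x₂) (h23 : x₂ ≤ x₃)
    (hroots : ({x₁, x₂, x₃} : Multiset ℝ) ≤ g.roots)
    (hlt : ∀ x : ℝ, x₁ ≤ x → x ≤ x₃ → |g.eval x| < 1) :
    (∃ z : ℂ, z.im ≠ 0 ∧ (Polynomial.aeval z) (g - 1) = 0) ∧
    (∃ z : ℂ, z.im ≠ 0 ∧ (Polynomial.aeval z) (g + 1) = 0) := by
  constructor
  · exact key g x₁ x₂ x₃ h12 h23 hroots hlt
  · have hroots' : ({x₁, x₂, x₃} : Multiset ℝ) ≤ (-g).roots := by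
      rw [roots_neg]
      exact hroots
    have hlt' : ∀ x : ℝ, x₁ ≤ x → x ≤ x₃ → |(-g).eval x| < 1 := by
      intro x hx1 hx3
      rw [eval_neg, abs_neg]
      exact hlt x hx1 hx3
    obtain ⟨z, hz, hz0⟩ := key (-g) x₁ x₂ x₃ h12 h23 hroots' hlt'
    refine ⟨z, hz, ?_⟩
    have heq : (-g : Polynomial ℝ) - 1 = -(g + 1) := by ring
    rw [heq, map_neg, neg_eq_zero] at hz0
    exact hz0
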